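/- Fix q with 1 < q < 2, a relaxation interval ε = [ε₋, ε₊] with 0 < ε₋ ≤ ε₊ < ∞, and let Ω ⊂ ℝ^d be a measurable set of finite Lebesgue measure. Let τ_n, τ_{n+1} ∈ L²(Ω; ℝ^d), set w_n = clamp_ε(|τ_n|)^{q-2}, and assume the orthogonality ∫_Ω w_n τ_{n+1}·(τ_n - τ_{n+1}) dx = 0. Then (1/2)∫_Ω w_n |τ_n - τ_{n+1}|² dx ≤ J*_ε(τ_n) - J*_ε(τ_{n+1}). -/

import Mathlib

open Real MeasureTheory
open scoped RealInnerProductSpace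

/-- The relaxed integrand `κ*_ε`. -/
noncomputable def kappaStar (q em ep t : ℝ) : ℝ :=
  if t ≤ em then (1/2) * em ^ (q-2) * t^2 + (1/q - 1/2) * em ^ q
  else if t ≤ ep then (1/q) * t ^ q
  else (1/2) * ep ^ (q-2) * t^2 + (1/q - 1/2) * ep ^ q

/-- The relaxed dual energy `J*_ε(τ) = ∫_Ω κ*_ε(|τ|) dx`. -/
noncomputable def Jeps (q em ep : ℝ) {d : ℕ} (Ω : Set (EuclideanSpace ℝ (Fin d)))
    (τ : EuclideanSpace ℝ (Fin d) → EuclideanSpace ℝ (Fin d)) : ℝ :=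
  ∫ x in Ω, kappaStar q em ep ‖τ x‖


lemma amgm_aux {q : ℝ} (hq1 : 1 < q) (hq2 : q < 2) {a s : ℝ} (ha : 0 < a) (hs : 0 ≤ s) :
    (1/q) * s ^ q ≤ (1/2) * a ^ (q-2) * s^2 + (1/q - 1/2) * a ^ q := by
  have hq0 : (0:ℝ) < q := by linarith
  have h1 : ((s:ℝ)^2) ^ (q/2) = s ^ q := by
    rw [← Real.rpow_natCast s 2, ← Real.rpow_mul hs]
    congr 1
    push_cast
    ring
  have h2 : (a ^ (q-2) * s^2) ^ (q/2) = a ^ ((q-2)*(q/2)) * s ^ q := by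
    rw [Real.mul_rpow (Real.rpow_nonneg ha.le _) (sq_nonneg s), h1, ← Real.rpow_mul ha.le]
  have h3 : ((a:ℝ)^q) ^ (1-q/2) = a ^ (q*(1-q/2)) := by rw [← Real.rpow_mul ha.le]
  have h4 : a ^ ((q-2)*(q/2)) * a ^ (q*(1-q/2)) = 1 := by
    rw [← Real.rpow_add ha, show (q-2)*(q/2)+q*(1-q/2) = 0 by ring, Real.rpow_zero]
  have heq : (a ^ (q-2) * s^2) ^ (q/2) * (a ^ q) ^ (1-q/2) = s ^ q := by
    rw [h2, h3]
    calc a ^ ((q-2)*(q/2)) * s ^ q * a ^ (q*(1-q/2))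
        = (a ^ ((q-2)*(q/2)) * a ^ (q*(1-q/2))) * s ^ q := by ring
      _ = s ^ q := by rw [h4, one_mul]
  have key := Real.geom_mean_le_arith_mean2_weighted
    (w₁ := q/2) (w₂ := 1-q/2) (p₁ := a ^ (q-2) * s^2) (p₂ := a ^ q) (by linarith : (0:ℝ) ≤ q/2)
    (by linarith : (0:ℝ) ≤ 1 - q/2)
    (mul_nonneg (Real.rpow_nonneg ha.le _) (sq_nonneg s))
    (Real.rpow_nonneg ha.le q) (by ring)
  rw [heq] at key
  have hmul := mul_le_mul_of_nonneg_left key (by positivity : (0:ℝ) ≤ 1/q)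
  have hrr : (1/q) * ((q/2) * (a ^ (q-2) * s^2) + (1 - q/2) * a ^ q)
      = (1/2) * a ^ (q-2) * s^2 + (1/q - 1/2) * a ^ q := by
    field_simp
  rw [hrr] at hmul
  exact hmul

lemma kappaStar_eq {q em ep : ℝ} (hem : 0 < em) (hemep : em ≤ ep) {t : ℝ} (ht : 0 ≤ t) :
    kappaStar q em ep t
      = (1/2) * (max em (min t ep)) ^ (q-2) * t^2 + (1/q - 1/2) * (max em (min t ep)) ^ q := by
  unfold kappaStar
  rcases le_or_gt t em with h1 | h1
  · rw [if_pos h1, max_eq_left (le_trans (min_le_left _ _) h1)]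
  · rw [if_neg (not_le.mpr h1)]
    rcases le_or_gt t ep with h2 | h2
    · rw [if_pos h2, min_eq_left h2, max_eq_right h1.le]
      have ht0 : 0 < t := lt_trans hem h1
      have he : t ^ (q-2) * t^2 = t ^ q := by
        rw [← Real.rpow_natCast t 2, ← Real.rpow_add ht0]
        norm_num
      linear_combination (-1/2 : ℝ) * he
    · rw [if_neg (not_le.mpr h2), min_eq_right h2.le, max_eq_right hemep]

lemma kappaStar_min {q em ep : ℝ} (hq1 : 1 < q) (hq2 : q < 2) (hem : 0 < em)
    (hemep : em ≤ ep) {a s : ℝ} (hs : 0 ≤ s) (ha1 : em ≤ a) (ha2 : a ≤ ep) :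
    kappaStar q em ep s ≤ (1/2) * a ^ (q-2) * s^2 + (1/q - 1/2) * a ^ q := by
  have ha : 0 < a := lt_of_lt_of_le hem ha1
  have hep : 0 < ep := lt_of_lt_of_le hem hemep
  unfold kappaStar
  rcases le_or_gt s em with h1 | h1
  · rw [if_pos h1]
    have hb1 : a ^ (q-2) ≤ em ^ (q-2) := Real.rpow_le_rpow_of_nonpos hem ha1 (by linarith)
    have hamgm := amgm_aux hq1 hq2 ha hem.le
    have hem_eq : em ^ (q-2) * em^2 = em ^ q := by
      rw [← Real.rpow_natCast em 2, ← Real.rpow_add hem]; norm_num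
    have hs2 : s^2 ≤ em^2 := by nlinarith
    nlinarith [mul_nonneg (sub_nonneg.mpr hb1) (sub_nonneg.mpr hs2)]
  · rw [if_neg (not_le.mpr h1)]
    rcases le_or_gt s ep with h2 | h2
    · rw [if_pos h2]
      exact amgm_aux hq1 hq2 ha hs
    · rw [if_neg (not_le.mpr h2)]
      have hb1 : ep ^ (q-2) ≤ a ^ (q-2) := Real.rpow_le_rpow_of_nonpos ha ha2 (by linarith)
      have hamgm := amgm_aux hq1 hq2 ha hep.le
      have hep_eq : ep ^ (q-2) * ep^2 = ep ^ q := by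
        rw [← Real.rpow_natCast ep 2, ← Real.rpow_add hep]; norm_num
      have hs2 : ep^2 ≤ s^2 := by nlinarith
      nlinarith [mul_nonneg (sub_nonneg.mpr hb1) (sub_nonneg.mpr hs2)]
/-- first addend estimate in the proof of exponential decay.
For `1 < q < 2`, `0 < ε₋ ≤ ε₊ < ∞` and `Ω ⊂ ℝ^d` measurable of finite measure: if
`τ_n, τ_{n+1} ∈ L²(Ω;ℝ^d)` and, with `w_n = clamp_ε(|τ_n|)^(q-2)`, the orthogonality
`∫_Ω w_n τ_{n+1}·(τ_n - τ_{n+1}) dx = 0` holds, then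
`(1/2) ∫_Ω w_n |τ_n - τ_{n+1}|² dx ≤ J*_ε(τ_n) - J*_ε(τ_{n+1})`. -/
theorem stmt16 (q em ep : ℝ) (hq1 : 1 < q) (hq2 : q < 2) (hem : 0 < em) (hemep : em ≤ ep)
    {d : ℕ} (Ω : Set (EuclideanSpace ℝ (Fin d))) (hΩ : MeasurableSet Ω)
    (hΩfin : volume Ω < ⊤)
    (τn τn1 : EuclideanSpace ℝ (Fin d) → EuclideanSpace ℝ (Fin d))
    (hτn : Measurable τn) (hτn1 : Measurable τn1)
    (hτn2 : IntegrableOn (fun x => ‖τn x‖ ^ 2) Ω volume)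
    (hτn12 : IntegrableOn (fun x => ‖τn1 x‖ ^ 2) Ω volume)
    (horth : (∫ x in Ω, (max em (min ‖τn x‖ ep)) ^ (q-2) * ⟪τn1 x, τn x - τn1 x⟫) = 0) :
    (1/2) * (∫ x in Ω, (max em (min ‖τn x‖ ep)) ^ (q-2) * ‖τn x - τn1 x‖ ^ 2)
      ≤ Jeps q em ep Ω τn - Jeps q em ep Ω τn1 := by
  have hep : 0 < ep := lt_of_lt_of_le hem hemep
  -- the clamp function and weight
  have hA1 : ∀ x, em ≤ max em (min ‖τn x‖ ep) := fun x => le_max_left _ _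
  have hA2 : ∀ x, max em (min ‖τn x‖ ep) ≤ ep := fun x => max_le hemep (min_le_right _ _)
  have hApos : ∀ x, (0:ℝ) < max em (min ‖τn x‖ ep) := fun x => lt_of_lt_of_le hem (hA1 x)
  have hWpos : ∀ x, (0:ℝ) < (max em (min ‖τn x‖ ep)) ^ (q-2) :=
    fun x => Real.rpow_pos_of_pos (hApos x) _
  have hWle : ∀ x, (max em (min ‖τn x‖ ep)) ^ (q-2) ≤ em ^ (q-2) :=
    fun x => Real.rpow_le_rpow_of_nonpos hem (hA1 x) (by linarith)
  -- measurability
  have hAmeas : Measurable fun x => max em (min ‖τn x‖ ep) :=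
    measurable_const.max (hτn.norm.min measurable_const)
  have hWmeas : Measurable fun x => (max em (min ‖τn x‖ ep)) ^ (q-2) := by
    have : (fun x => (max em (min ‖τn x‖ ep)) ^ (q-2))
        = fun x => Real.exp (Real.log (max em (min ‖τn x‖ ep)) * (q-2)) := by
      funext x
      rw [Real.rpow_def_of_pos (hApos x)]
    rw [this]
    exact Real.measurable_exp.comp ((Real.measurable_log.comp hAmeas).mul_const _)
  have hkmeas : Measurable (kappaStar q em ep) := by
    unfold kappaStar
    apply Measurable.ite (measurableSet_le measurable_id measurable_const)
    · exact (((measurable_id.pow_const 2).const_mul _).add measurable_const)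
    · apply Measurable.ite (measurableSet_le measurable_id measurable_const)
      · exact (Real.continuous_rpow_const (by linarith : (0:ℝ) ≤ q)).measurable.const_mul _
      · exact (((measurable_id.pow_const 2).const_mul _).add measurable_const)
  have hdmeas : Measurable fun x => ‖τn x - τn1 x‖ ^ 2 := (hτn.sub hτn1).norm.pow_const 2
  have himeas : Measurable fun x => ⟪τn1 x, τn x - τn1 x⟫ := hτn1.inner (hτn.sub hτn1)
  -- integrability of auxiliary integrands
  have hIntdiff : IntegrableOn (fun x => ‖τn x - τn1 x‖ ^ 2) Ω volume := by
    apply Integrable.mono' (((hτn2.const_mul 2).add (hτn12.const_mul 2)))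
      hdmeas.aestronglyMeasurable
    filter_upwards with x
    have h := norm_sub_le (τn x) (τn1 x)
    have h2 : (0:ℝ) ≤ ‖τn x - τn1 x‖ := norm_nonneg _
    simp only [Pi.add_apply]
    rw [Real.norm_eq_abs, abs_of_nonneg (by positivity)]
    have h3 : ‖τn x - τn1 x‖^2 ≤ (‖τn x‖ + ‖τn1 x‖)^2 := pow_le_pow_left₀ h2 h 2
    nlinarith [sq_nonneg (‖τn x‖ - ‖τn1 x‖)]
  have hInt1 : IntegrableOn (fun x => (max em (min ‖τn x‖ ep)) ^ (q-2) * ‖τn x - τn1 x‖ ^ 2)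
      Ω volume := by
    apply Integrable.mono' (hIntdiff.const_mul (em ^ (q-2)))
      (hWmeas.mul hdmeas).aestronglyMeasurable
    filter_upwards with x
    rw [Real.norm_eq_abs, Pi.mul_apply, abs_of_nonneg (mul_nonneg (hWpos x).le (by positivity))]
    exact mul_le_mul_of_nonneg_right (hWle x) (by positivity)
  have hInt2 : IntegrableOn (fun x => (max em (min ‖τn x‖ ep)) ^ (q-2) * ⟪τn1 x, τn x - τn1 x⟫)
      Ω volume := by
    apply Integrable.mono' (((hτn12.add hIntdiff).const_mul (em ^ (q-2))))
      (hWmeas.mul himeas).aestronglyMeasurable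
    filter_upwards with x
    simp only [Pi.add_apply]
    rw [Real.norm_eq_abs, Pi.mul_apply, abs_mul, abs_of_nonneg (hWpos x).le]
    have hi : |⟪τn1 x, τn x - τn1 x⟫| ≤ ‖τn1 x‖ * ‖τn x - τn1 x‖ := abs_real_inner_le_norm _ _
    have hW := hWle x
    have hW0 := (hWpos x).le
    have hem2 : (0:ℝ) ≤ em ^ (q-2) := Real.rpow_nonneg hem.le _
    have t1 : (max em (min ‖τn x‖ ep)) ^ (q-2) * |⟪τn1 x, τn x - τn1 x⟫|
        ≤ em ^ (q-2) * |⟪τn1 x, τn x - τn1 x⟫| :=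
      mul_le_mul_of_nonneg_right hW (abs_nonneg _)
    have t3 : ‖τn1 x‖ * ‖τn x - τn1 x‖ ≤ ‖τn1 x‖^2 + ‖τn x - τn1 x‖^2 := by
      nlinarith [sq_nonneg (‖τn1 x‖ - ‖τn x - τn1 x‖), norm_nonneg (τn1 x),
        norm_nonneg (τn x - τn1 x)]
    have t4 : em ^ (q-2) * |⟪τn1 x, τn x - τn1 x⟫|
        ≤ em ^ (q-2) * (‖τn1 x‖^2 + ‖τn x - τn1 x‖^2) :=
      mul_le_mul_of_nonneg_left (le_trans hi t3) hem2
    linarith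
  have hc : (0:ℝ) < 1/q - 1/2 := by
    have : (1:ℝ)/2 < 1/q := by
      rw [div_lt_div_iff₀ (by norm_num) (by linarith)]
      linarith
    linarith
  have hk_nonneg : ∀ t : ℝ, 0 ≤ t → 0 ≤ kappaStar q em ep t := by
    intro t ht
    rw [kappaStar_eq hem hemep ht]
    have hA : (0:ℝ) < max em (min t ep) := lt_of_lt_of_le hem (le_max_left _ _)
    have h1 : (0:ℝ) ≤ (max em (min t ep)) ^ (q-2) := (Real.rpow_pos_of_pos hA _).le
    have h2 : (0:ℝ) ≤ (max em (min t ep)) ^ q := (Real.rpow_pos_of_pos hA _).le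
    have := sq_nonneg t
    nlinarith
  have hk_le : ∀ t : ℝ, 0 ≤ t →
      kappaStar q em ep t ≤ (1/2) * em ^ (q-2) * t^2 + (1/q - 1/2) * em ^ q :=
    fun t ht => kappaStar_min hq1 hq2 hem hemep ht le_rfl hemep
  have hkint : ∀ (τ : EuclideanSpace ℝ (Fin d) → EuclideanSpace ℝ (Fin d)),
      Measurable τ → IntegrableOn (fun x => ‖τ x‖ ^ 2) Ω volume →
      IntegrableOn (fun x => kappaStar q em ep ‖τ x‖) Ω volume := by
    intro τ hτ hτ2
    apply Integrable.mono'
      ((hτ2.const_mul ((1/2) * em ^ (q-2))).add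
        (integrableOn_const hΩfin.ne : IntegrableOn
          (fun _ => (1/q - 1/2) * em ^ q) Ω volume))
      (hkmeas.comp hτ.norm).aestronglyMeasurable
    filter_upwards with x
    simp only [Pi.add_apply, Function.comp_apply]
    rw [Real.norm_eq_abs, abs_of_nonneg (hk_nonneg _ (norm_nonneg _))]
    have := hk_le ‖τ x‖ (norm_nonneg _)
    linarith [this]
  have hInt3 := hkint τn hτn hτn2
  have hInt4 := hkint τn1 hτn1 hτn12
  -- pointwise identity
  have hpteq : ∀ x, (1/2) * (max em (min ‖τn x‖ ep)) ^ (q-2) * (‖τn x‖^2 - ‖τn1 x‖^2)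
      = (1/2) * ((max em (min ‖τn x‖ ep)) ^ (q-2) * ‖τn x - τn1 x‖ ^ 2)
        + (max em (min ‖τn x‖ ep)) ^ (q-2) * ⟪τn1 x, τn x - τn1 x⟫ := by
    intro x
    have hn := norm_sub_sq_real (τn x) (τn1 x)
    have hi : ⟪τn1 x, τn x - τn1 x⟫ = ⟪τn x, τn1 x⟫ - ‖τn1 x‖^2 := by
      rw [inner_sub_right, real_inner_comm, real_inner_self_eq_norm_sq]
    rw [hi]
    linear_combination (-(max em (min ‖τn x‖ ep)) ^ (q-2)/2) * hn
  -- pointwise inequality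
  have hpt : ∀ x, (1/2) * (max em (min ‖τn x‖ ep)) ^ (q-2) * (‖τn x‖^2 - ‖τn1 x‖^2)
      ≤ kappaStar q em ep ‖τn x‖ - kappaStar q em ep ‖τn1 x‖ := by
    intro x
    have h1 := kappaStar_eq (q := q) (ep := ep) hem hemep (norm_nonneg (τn x))
    have h2 := kappaStar_min hq1 hq2 hem hemep (norm_nonneg (τn1 x)) (hA1 x) (hA2 x)
    rw [h1]
    have e : (1/2) * (max em (min ‖τn x‖ ep)) ^ (q-2) * (‖τn x‖^2 - ‖τn1 x‖^2)
        = (1/2) * (max em (min ‖τn x‖ ep)) ^ (q-2) * ‖τn x‖^2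
          - (1/2) * (max em (min ‖τn x‖ ep)) ^ (q-2) * ‖τn1 x‖^2 := by ring
    rw [e]
    linarith [h2]
  have hIntLHS : IntegrableOn
      (fun x => (1/2) * (max em (min ‖τn x‖ ep)) ^ (q-2) * (‖τn x‖^2 - ‖τn1 x‖^2)) Ω volume := by
    have : (fun x => (1/2) * (max em (min ‖τn x‖ ep)) ^ (q-2) * (‖τn x‖^2 - ‖τn1 x‖^2))
        = fun x => (1/2) * ((max em (min ‖τn x‖ ep)) ^ (q-2) * ‖τn x - τn1 x‖ ^ 2)
          + (max em (min ‖τn x‖ ep)) ^ (q-2) * ⟪τn1 x, τn x - τn1 x⟫ := funext hpteq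
    rw [this]
    exact (hInt1.const_mul _).add hInt2
  have hmono : (∫ x in Ω, (1/2) * (max em (min ‖τn x‖ ep)) ^ (q-2) * (‖τn x‖^2 - ‖τn1 x‖^2))
      ≤ ∫ x in Ω, (kappaStar q em ep ‖τn x‖ - kappaStar q em ep ‖τn1 x‖) :=
    setIntegral_mono_on hIntLHS (hInt3.sub hInt4) hΩ (fun x _ => hpt x)
  have hsplit : (∫ x in Ω, (1/2) * (max em (min ‖τn x‖ ep)) ^ (q-2) * (‖τn x‖^2 - ‖τn1 x‖^2))
      = (1/2) * (∫ x in Ω, (max em (min ‖τn x‖ ep)) ^ (q-2) * ‖τn x - τn1 x‖ ^ 2) := by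
    calc (∫ x in Ω, (1/2) * (max em (min ‖τn x‖ ep)) ^ (q-2) * (‖τn x‖^2 - ‖τn1 x‖^2))
        = ∫ x in Ω, ((1/2) * ((max em (min ‖τn x‖ ep)) ^ (q-2) * ‖τn x - τn1 x‖ ^ 2)
            + (max em (min ‖τn x‖ ep)) ^ (q-2) * ⟪τn1 x, τn x - τn1 x⟫) := by
          simp only [hpteq]
      _ = (∫ x in Ω, (1/2) * ((max em (min ‖τn x‖ ep)) ^ (q-2) * ‖τn x - τn1 x‖ ^ 2))
            + ∫ x in Ω, (max em (min ‖τn x‖ ep)) ^ (q-2) * ⟪τn1 x, τn x - τn1 x⟫ :=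
          integral_add (hInt1.const_mul _) hInt2
      _ = (1/2) * (∫ x in Ω, (max em (min ‖τn x‖ ep)) ^ (q-2) * ‖τn x - τn1 x‖ ^ 2) + 0 := by
          rw [integral_const_mul, horth]
      _ = _ := by ring
  have hsub : (∫ x in Ω, (kappaStar q em ep ‖τn x‖ - kappaStar q em ep ‖τn1 x‖))
      = Jeps q em ep Ω τn - Jeps q em ep Ω τn1 := by
    rw [integral_sub hInt3 hInt4]
    rfl
  rw [← hsplit]
  rw [hsub] at hmono
  exact hmono
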